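/- Let ε ∈ ℝ with ε/π irrational. If f, g : [−1,1] → ℝ are continuous and f(cos t) + g(cos(t+ε)) = 0 for all t ∈ ℝ, then f and g are constant functions (with f = −g ≡ const). In particular the only solution of the homogeneous Dirichlet problem u = f(x)+g(y), u|_C = 0 on the ellipse C = {(cos t, cos(t+ε))} with continuous f,g is u ≡ 0 up to the trivial constant splitting. -/

import Mathlib

open Set Real

/-- If `ε/π` is irrational and continuous `f, g : [−1,1] → ℝ` satisfy
`f(cos t) + g(cos(t+ε)) = 0` for all `t`, then `f` and `g` are constant
(with `g = −f`). -/
theorem dirichlet_uniqueness_on_ellipse (ε : ℝ) (hirr : Irrational (ε / π))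
    (f g : ℝ → ℝ) (hf : ContinuousOn f (Icc (-1) 1))
    (hg : ContinuousOn g (Icc (-1) 1))
    (h : ∀ t : ℝ, f (cos t) + g (cos (t + ε)) = 0) :
    ∃ c : ℝ, (∀ x ∈ Icc (-1 : ℝ) 1, f x = c) ∧ (∀ y ∈ Icc (-1 : ℝ) 1, g y = -c) := by
  set F : ℝ → ℝ := fun t => f (cos t) with hF
  have hFc : Continuous F :=
    hf.comp_continuous continuous_cos fun t => ⟨neg_one_le_cos t, cos_le_one t⟩
  -- key shift invariance
  have key : ∀ t : ℝ, F (t + 2 * ε) = F t := by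
    intro t
    have h1 := h t
    have h2 := h (-(t + 2 * ε))
    have e1 : cos (-(t + 2 * ε)) = cos (t + 2 * ε) := Real.cos_neg _
    have e2 : cos (-(t + 2 * ε) + ε) = cos (t + ε) := by
      rw [show -(t + 2 * ε) + ε = -(t + ε) by ring, Real.cos_neg]
    simp only [hF]
    rw [e1, e2] at h2
    linarith
  set S := AddSubgroup.closure ({2 * ε, 2 * π} : Set ℝ) with hS
  have hper : ∀ s ∈ S, ∀ t : ℝ, F (t + s) = F t := by
    intro s hs
    induction hs using AddSubgroup.closure_induction with
    | mem x hx =>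
      rcases hx with hx | hx
      · subst hx; exact key
      · subst hx; intro t; simp only [hF]; rw [Real.cos_add_two_pi]
    | zero => intro t; simp
    | add a b _ _ ha hb => intro t; rw [← add_assoc, hb, ha]
    | neg a _ ha => intro t; have := ha (t + -a); simpa using this.symm
  have hdense : Dense (S : Set ℝ) := by
    rcases AddSubgroup.dense_or_cyclic S with hd | ⟨a, ha⟩
    · exact hd
    · exfalso
      have hεS : (2 * ε) ∈ S := AddSubgroup.subset_closure (by simp)
      have hπS : (2 * π) ∈ S := AddSubgroup.subset_closure (by simp)
      rw [ha, AddSubgroup.mem_closure_singleton] at hεS hπS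
      obtain ⟨m, hm⟩ := hεS
      obtain ⟨n, hn⟩ := hπS
      have hπ : (0 : ℝ) < π := Real.pi_pos
      have hn0 : (n : ℝ) ≠ 0 := by
        rintro h0
        simp only [zsmul_eq_mul] at hn
        rw [h0] at hn; simp at hn
      have ha0 : a ≠ 0 := by
        rintro rfl
        simp only [zsmul_eq_mul, mul_zero] at hn; linarith
      apply hirr
      refine ⟨(m : ℚ) / (n : ℚ), ?_⟩
      simp only [zsmul_eq_mul] at hm hn
      push_cast
      field_simp
      linear_combination ((n : ℝ) * hm - (m : ℝ) * hn) / 2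
    -- end
  have hconst : ∀ t : ℝ, F t = F 0 := by
    have hcl : closure (S : Set ℝ) ⊆ {t | F t = F 0} := by
      apply closure_minimal
      · intro s hs
        have := hper s hs 0
        simpa using this
      · exact isClosed_eq hFc continuous_const
    intro t
    have : t ∈ closure (S : Set ℝ) := hdense t
    exact hcl this
  refine ⟨f (cos 0), fun x hx => ?_, fun y hy => ?_⟩
  · have : f (cos (Real.arccos x)) = f (cos 0) := hconst (Real.arccos x)
    rwa [Real.cos_arccos hx.1 hx.2] at this
  · have ht := h (Real.arccos y - ε)
    rw [sub_add_cancel, Real.cos_arccos hy.1 hy.2] at ht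
    have : f (cos (Real.arccos y - ε)) = f (cos 0) := hconst _
    linarith
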